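/- In the sl(N) Onsager algebra A_N (N ≥ 4), [e_1, S_N(N)] = S_1(N+1), where S_k(r) denotes the right-nested string commutator. -/

import Mathlib

noncomputable section

/-- The generalized Dolan–Grady relations for a cyclic family `e` of `N` elements. -/
def DolanGrady {N : ℕ} [NeZero N] {L : Type*} [LieRing L] (e : Fin N → L) : Prop :=
  (∀ i j : Fin N, (j = i + 1 ∨ i = j + 1) → ⁅e i, ⁅e i, e j⁆⁆ = e j) ∧
  (∀ i j : Fin N, i ≠ j → j ≠ i + 1 → i ≠ j + 1 → ⁅e i, e j⁆ = 0)

/-- The right-nested string `S_k(r) = [e_k,[e_{k+1},...,e_{k+r-1}]...]`, with `S _ 0 = 0`. -/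
def S {N : ℕ} [NeZero N] {L : Type*} [LieRing L] (e : Fin N → L) : ℕ → Fin N → L
  | 0, _ => 0
  | 1, k => e k
  | (r + 2), k => ⁅e k, S e (r + 1) (k + 1)⁆


open Fin.NatCast

section Aux

/-- helper for inequalities of residues mod `N`. -/
lemma modne' {N a b : ℕ} (ha : a < N) (hb : b ≤ N) (h1 : a ≠ b) (h2 : ¬(a = 0 ∧ b = N)) :
    a % N ≠ b % N := by
  rcases eq_or_lt_of_le hb with rfl | hb'
  · rw [Nat.mod_self, Nat.mod_eq_of_lt ha]
    intro h0
    exact h2 ⟨h0, rfl⟩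
  · rw [Nat.mod_eq_of_lt ha, Nat.mod_eq_of_lt hb']
    exact h1

variable {N : ℕ} [NeZero N] {L : Type*} [LieRing L] (e : Fin N → L)

lemma natCast_ne_of_mod {a b : ℕ} (h : a % N ≠ b % N) : ((a : Fin N)) ≠ (b : Fin N) := by
  rw [Ne, Fin.ext_iff, Fin.val_natCast, Fin.val_natCast]
  exact h

lemma dg2' (hDG : DolanGrady e) (a b : ℕ) (h1 : a % N ≠ b % N) (h2 : b % N ≠ (a + 1) % N)
    (h3 : a % N ≠ (b + 1) % N) : ⁅e (a : Fin N), e (b : Fin N)⁆ = 0 := by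
  apply hDG.2
  · exact natCast_ne_of_mod h1
  · rw [← Nat.cast_add_one]; exact natCast_ne_of_mod h2
  · rw [← Nat.cast_add_one]; exact natCast_ne_of_mod h3

/-- if `x` commutes with all letters of a string, it commutes with the string. -/
lemma comm_S (x : L) :
    ∀ m j : ℕ, (∀ i : ℕ, j ≤ i → i < j + m → ⁅x, e (i : Fin N)⁆ = 0) →
      ⁅x, S e m ((j : ℕ) : Fin N)⁆ = 0 := by
  intro m
  induction m using Nat.strong_induction_on with
  | _ m ih =>
    match m with
    | 0 => intro j h; simp [S]
    | 1 => intro j h; exact h j le_rfl (by omega)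
    | (r + 2) =>
      intro j h
      show ⁅x, ⁅e (j : Fin N), S e (r + 1) ((j : Fin N) + 1)⁆⁆ = 0
      rw [← Nat.cast_add_one, leibniz_lie, h j le_rfl (by omega),
        ih (r + 1) (by omega) (j + 1) (fun i h1 h2 => h i (by omega) (by omega))]
      simp

/-- pushing `u = [e₁, e₀]` through a string ending at `e_{N-1}` extends it by two. -/
lemma push_u (hN : 4 ≤ N) (hDG : DolanGrady e) :
    ∀ m j : ℕ, 1 ≤ m → 3 ≤ j → j + m = N →
      ⁅⁅e ((1 : ℕ) : Fin N), e ((0 : ℕ) : Fin N)⁆, S e m ((j : ℕ) : Fin N)⁆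
        = S e (m + 2) ((j : ℕ) : Fin N) := by
  intro m
  induction m using Nat.strong_induction_on with
  | _ m ih =>
    match m with
    | 0 => intro j h0 _ _; omega
    | 1 =>
      intro j _ h3 hjN
      show ⁅⁅e ((1 : ℕ) : Fin N), e ((0 : ℕ) : Fin N)⁆, e ((j : ℕ) : Fin N)⁆
        = ⁅e (j : Fin N), ⁅e ((j : Fin N) + 1), e ((j : Fin N) + 1 + 1)⁆⁆
      have c1 : ((j : Fin N) + 1) = ((0 : ℕ) : Fin N) := by
        rw [← Nat.cast_add_one, Nat.cast_zero, show j + 1 = N by omega, Fin.natCast_self]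
      have c2 : ((j : Fin N) + 1 + 1) = ((1 : ℕ) : Fin N) := by
        rw [c1, Nat.cast_zero, zero_add, Nat.cast_one]
      rw [c2, c1, ← lie_skew,
        ← lie_skew (e ((1 : ℕ) : Fin N)) (e ((0 : ℕ) : Fin N)), lie_neg, neg_neg]
    | (r + 2) =>
      intro j _ h3 hjN
      show ⁅⁅e ((1 : ℕ) : Fin N), e ((0 : ℕ) : Fin N)⁆,
          ⁅e (j : Fin N), S e (r + 1) ((j : Fin N) + 1)⁆⁆
        = ⁅e (j : Fin N), S e (r + 3) ((j : Fin N) + 1)⁆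
      have hu : ⁅⁅e ((1 : ℕ) : Fin N), e ((0 : ℕ) : Fin N)⁆, e (j : Fin N)⁆ = 0 := by
        rw [lie_lie,
          dg2' e hDG 0 j (modne' (by omega) (by omega) (by omega) (by omega))
            (modne' (by omega) (by omega) (by omega) (by omega))
            (modne' (by omega) (by omega) (by omega) (by omega)),
          dg2' e hDG 1 j (modne' (by omega) (by omega) (by omega) (by omega))
            (modne' (by omega) (by omega) (by omega) (by omega))
            (modne' (by omega) (by omega) (by omega) (by omega))]
        simp
      rw [← Nat.cast_add_one, leibniz_lie, hu, zero_lie, zero_add,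
        ih (r + 1) (by omega) (j + 1) (by omega) (by omega) (by omega)]

end Aux

/-- If `e_1,…,e_N` (`N ≥ 4`) satisfy the generalized Dolan–Grady relations,
then `[e_1, S_N(N)] = S_1(N+1)`. -/
theorem bracket_e1_closed_string_N (N : ℕ) (hN : 4 ≤ N) [NeZero N]
    {L : Type*} [LieRing L] [LieAlgebra ℂ L]
    (e : Fin N → L) (hDG : DolanGrady e) :
    ⁅e (1 : Fin N), S e N ((N : ℕ) : Fin N)⁆ = S e (N + 1) (1 : Fin N) := by
  obtain ⟨M, rfl⟩ : ∃ M, N = M + 4 := ⟨N - 4, by omega⟩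
  -- cast bookkeeping
  have c10 : (1 : Fin (M + 4)) = ((1 : ℕ) : Fin (M + 4)) := by rw [Nat.cast_one]
  have c0 : (((M + 4 : ℕ)) : Fin (M + 4)) = ((0 : ℕ) : Fin (M + 4)) := by
    rw [Fin.natCast_self, Nat.cast_zero]
  have cs : ∀ a b : ℕ, a + 1 = b → ((a : Fin (M + 4)) + 1) = ((b : ℕ) : Fin (M + 4)) := by
    intro a b h
    rw [← h]
    exact (Nat.cast_add_one a).symm
  -- abbreviations
  set u : L := ⁅e ((1 : ℕ) : Fin (M + 4)), e ((0 : ℕ) : Fin (M + 4))⁆ with hu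
  set T : L := S e (M + 1) ((3 : ℕ) : Fin (M + 4)) with hT
  set Z : L := S e (M + 2) ((2 : ℕ) : Fin (M + 4)) with hZ
  set Y : L := S e (M + 3) ((1 : ℕ) : Fin (M + 4)) with hY
  set w : L := ⁅e ((0 : ℕ) : Fin (M + 4)), ⁅e ((1 : ℕ) : Fin (M + 4)), e ((2 : ℕ) : Fin (M + 4))⁆⁆
    with hw
  -- basic bracket relations
  have h02 : ⁅e ((0 : ℕ) : Fin (M + 4)), e ((2 : ℕ) : Fin (M + 4))⁆ = 0 :=
    dg2' e hDG 0 2 (modne' (by omega) (by omega) (by omega) (by omega))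
      (modne' (by omega) (by omega) (by omega) (by omega))
      (modne' (by omega) (by omega) (by omega) (by omega))
  have h110 : ⁅e ((1 : ℕ) : Fin (M + 4)), ⁅e ((1 : ℕ) : Fin (M + 4)), e ((0 : ℕ) : Fin (M + 4))⁆⁆
      = e ((0 : ℕ) : Fin (M + 4)) := by
    apply hDG.1
    right
    rw [Nat.cast_zero, zero_add, Nat.cast_one]
  have h112 : ⁅e ((1 : ℕ) : Fin (M + 4)), ⁅e ((1 : ℕ) : Fin (M + 4)), e ((2 : ℕ) : Fin (M + 4))⁆⁆
      = e ((2 : ℕ) : Fin (M + 4)) := by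
    apply hDG.1
    left
    exact (cs 1 2 rfl).symm
  have hue1 : ⁅u, e ((1 : ℕ) : Fin (M + 4))⁆ = -e ((0 : ℕ) : Fin (M + 4)) := by
    rw [hu, ← lie_skew, h110]
  have hue2 : ⁅u, e ((2 : ℕ) : Fin (M + 4))⁆ = -w := by
    rw [hu, lie_lie, h02, lie_zero, zero_sub, hw]
  -- e₁ commutes with T
  have h1T : ⁅e ((1 : ℕ) : Fin (M + 4)), T⁆ = 0 := by
    rw [hT]
    apply comm_S
    intro i hi1 hi2
    exact dg2' e hDG 1 i (modne' (by omega) (by omega) (by omega) (by omega))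
      (modne' (by omega) (by omega) (by omega) (by omega))
      (modne' (by omega) (by omega) (by omega) (by omega))
  -- structural unfoldings
  have hZT : Z = ⁅e ((2 : ℕ) : Fin (M + 4)), T⁆ := by
    rw [hZ, hT]
    show ⁅e ((2 : ℕ) : Fin (M + 4)), S e (M + 1) (((2 : ℕ) : Fin (M + 4)) + 1)⁆ = _
    rw [cs 2 3 rfl]
  have hYZ : Y = ⁅e ((1 : ℕ) : Fin (M + 4)), Z⁆ := by
    rw [hY, hZ]
    show ⁅e ((1 : ℕ) : Fin (M + 4)), S e (M + 2) (((1 : ℕ) : Fin (M + 4)) + 1)⁆ = _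
    rw [cs 1 2 rfl]
  have hS42 : S e (M + 4) ((2 : ℕ) : Fin (M + 4))
      = ⁅e ((2 : ℕ) : Fin (M + 4)), S e (M + 3) ((3 : ℕ) : Fin (M + 4))⁆ := by
    show ⁅e ((2 : ℕ) : Fin (M + 4)), S e (M + 3) (((2 : ℕ) : Fin (M + 4)) + 1)⁆ = _
    rw [cs 2 3 rfl]
  -- [e₁, Y] = Z
  have hA : ⁅e ((1 : ℕ) : Fin (M + 4)), ⁅e ((2 : ℕ) : Fin (M + 4)), T⁆⁆
      = ⁅⁅e ((1 : ℕ) : Fin (M + 4)), e ((2 : ℕ) : Fin (M + 4))⁆, T⁆ := by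
    rw [leibniz_lie, h1T, lie_zero, add_zero]
  have h1Y : ⁅e ((1 : ℕ) : Fin (M + 4)), Y⁆ = Z := by
    rw [hYZ, hZT, hA, leibniz_lie, h112, h1T, lie_zero, add_zero]
  -- [e₁, w] = 0  (characteristic-zero argument)
  have h1w : ⁅e ((1 : ℕ) : Fin (M + 4)), w⁆ = 0 := by
    have key : ⁅e ((1 : ℕ) : Fin (M + 4)), w⁆ = -⁅e ((1 : ℕ) : Fin (M + 4)), w⁆ := by
      conv_lhs => rw [hw, leibniz_lie, h112, h02, add_zero, ← hu, leibniz_lie, hue1, hue2,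
        neg_lie, h02, neg_zero, zero_add, lie_neg]
    have h2 : (2 : ℂ) • ⁅e ((1 : ℕ) : Fin (M + 4)), w⁆ = 0 := by
      rw [two_smul]
      nth_rewrite 2 [key]
      exact add_neg_cancel _
    rcases smul_eq_zero.mp h2 with h | h
    · norm_num at h
    · exact h
  -- [u, T] = S_3(M+3)
  have huT : ⁅u, T⁆ = S e (M + 3) ((3 : ℕ) : Fin (M + 4)) := by
    rw [hT, hu]
    exact push_u e (by omega) hDG (M + 1) 3 (by omega) (by omega) (by omega)
  -- [u, Z] = -[w, T] + S_2(M+4)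
  have huZ : ⁅u, Z⁆ = -⁅w, T⁆ + S e (M + 4) ((2 : ℕ) : Fin (M + 4)) := by
    rw [hZT, leibniz_lie, hue2, huT, neg_lie, hS42]
  -- [e₁, [w, T]] = 0
  have h1wT : ⁅e ((1 : ℕ) : Fin (M + 4)), ⁅w, T⁆⁆ = 0 := by
    rw [leibniz_lie, h1w, h1T, zero_lie, lie_zero, add_zero]
  -- main computation
  have lhs1 : S e (M + 4) (((M + 4 : ℕ)) : Fin (M + 4)) = ⁅e ((0 : ℕ) : Fin (M + 4)), Y⁆ := by
    rw [c0, hY]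
    show ⁅e ((0 : ℕ) : Fin (M + 4)), S e (M + 3) (((0 : ℕ) : Fin (M + 4)) + 1)⁆ = _
    rw [cs 0 1 rfl]
  have rhs1 : S e (M + 4 + 1) ((1 : ℕ) : Fin (M + 4))
      = ⁅e ((1 : ℕ) : Fin (M + 4)), S e (M + 4) ((2 : ℕ) : Fin (M + 4))⁆ := by
    show ⁅e ((1 : ℕ) : Fin (M + 4)), S e (M + 4) (((1 : ℕ) : Fin (M + 4)) + 1)⁆ = _
    rw [cs 1 2 rfl]
  rw [c10, lhs1, rhs1, leibniz_lie, h1Y, hYZ, leibniz_lie, ← hu, hue1, neg_lie, huZ, lie_add,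
    lie_neg, h1wT]
  abel

end
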